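/- Let ζ be a primitive complex cube root of unity and let a = 4, b = 1, τ = 4ζ + ζ⁻¹. Then |1 - conj(τ)|² = 19 and (5+2)²/3 = 49/3 < 19, so there is no finite family of 7 primitive cube roots of unity c₁,…,c₇ with 1 - conj(τ) = ∑ᵢ 1/(1 - cᵢ). -/

import Mathlib

open Complex

lemma cube_root_facts (z : ℂ) (h : z ^ 2 + z + 1 = 0) :
    z * (starRingEnd ℂ) z = 1 ∧ z + (starRingEnd ℂ) z = -1 := by
  have h3 : z ^ 3 = 1 := by linear_combination (z - 1) * h
  have habs : ‖z‖ = 1 := by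
    have h' : ‖z‖ ^ 3 = 1 := by rw [← norm_pow, h3, norm_one]
    nlinarith [norm_nonneg z, sq_nonneg (‖z‖ - 1),
      sq_nonneg (‖z‖ + 1)]
  have hns : Complex.normSq z = 1 := by
    rw [← Complex.sq_norm, habs]; norm_num
  have hmul : z * (starRingEnd ℂ) z = 1 := by
    rw [Complex.mul_conj, hns]; norm_num
  refine ⟨hmul, ?_⟩
  linear_combination (starRingEnd ℂ) z * h - (z + 1) * hmul

lemma cube_root_ns (z : ℂ) (h : z ^ 2 + z + 1 = 0) :
    Complex.normSq (1 - z) = 3 := by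
  obtain ⟨hm, hs⟩ := cube_root_facts z h
  apply Complex.ofReal_inj.mp
  rw [← Complex.mul_conj]
  simp only [map_sub, map_one]
  push_cast
  linear_combination -hs + hm

theorem cubic_threefold_obstruction (ζ : ℂ) (hζ : ζ ^ 2 + ζ + 1 = 0) (τ : ℂ)
    (hτ : τ = 4 * ζ + ζ⁻¹) :
    ‖1 - (starRingEnd ℂ) τ‖ ^ 2 = 19 ∧ (49 : ℝ) / 3 < 19 ∧
    ¬∃ c : Fin 7 → ℂ, (∀ i, c i ^ 3 = 1 ∧ c i ≠ 1) ∧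
      1 - (starRingEnd ℂ) τ = ∑ i, 1 / (1 - c i) := by
  obtain ⟨hm, hs⟩ := cube_root_facts ζ hζ
  have hz0 : ζ ≠ 0 := by
    intro h; rw [h] at hζ; norm_num at hζ
  have hinv : ζ⁻¹ = ζ ^ 2 := by
    apply inv_eq_of_mul_eq_one_left
    linear_combination (ζ - 1) * hζ
  have hτ' : τ = 3 * ζ - 1 := by
    rw [hτ, hinv]; linear_combination hζ
  have hct : (starRingEnd ℂ) τ = 3 * (starRingEnd ℂ) ζ - 1 := by
    rw [hτ']; simp [map_sub, map_mul, map_ofNat]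
  have h19 : ‖1 - (starRingEnd ℂ) τ‖ ^ 2 = 19 := by
    rw [Complex.sq_norm]
    apply Complex.ofReal_inj.mp
    rw [← Complex.mul_conj]
    simp only [map_sub, map_one, hct, map_mul, Complex.conj_conj, map_ofNat]
    push_cast
    linear_combination -6 * hs + 9 * hm
  refine ⟨h19, by norm_num, ?_⟩
  rintro ⟨c, hc, heq⟩
  have hci : ∀ i, ‖1 / (1 - c i)‖ = 1 / Real.sqrt 3 := by
    intro i
    obtain ⟨h3, h1⟩ := hc i
    have hq : (c i) ^ 2 + c i + 1 = 0 := by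
      have hfac : (c i - 1) * ((c i) ^ 2 + c i + 1) = 0 := by linear_combination h3
      rcases mul_eq_zero.mp hfac with h | h
      · exact absurd (sub_eq_zero.mp h) h1
      · exact h
    have hns := cube_root_ns (c i) hq
    rw [norm_div, norm_one, Complex.norm_def, hns]
  have hsumle : ‖∑ i, 1 / (1 - c i)‖ ≤ 7 / Real.sqrt 3 := by
    calc ‖∑ i, 1 / (1 - c i)‖ ≤ ∑ i, ‖1 / (1 - c i)‖ :=
          norm_sum_le _ _
      _ = ∑ _i : Fin 7, 1 / Real.sqrt 3 := Finset.sum_congr rfl (fun i _ => hci i)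
      _ = 7 / Real.sqrt 3 := by rw [Finset.sum_const]; simp; ring
  rw [heq] at h19
  have hs3 : Real.sqrt 3 ^ 2 = 3 := Real.sq_sqrt (by norm_num)
  have hs3pos : 0 < Real.sqrt 3 := Real.sqrt_pos.mpr (by norm_num)
  have habsnn : 0 ≤ ‖∑ i, 1 / (1 - c i)‖ := norm_nonneg _
  have hle : ‖∑ i, 1 / (1 - c i)‖ ^ 2 ≤ (7 / Real.sqrt 3) ^ 2 :=
    pow_le_pow_left₀ habsnn hsumle 2
  rw [div_pow, hs3] at hle
  rw [h19] at hle
  norm_num at hle
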